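/- Let k be an algebraically closed field of characteristic ≠ 2, with i a square root of −1. The subgroup of PGL(2,k) generated by the classes of [[1,0],[0,-1]], [[0,1],[1,0]], [[1,i],[1,-i]], and [[i,0],[0,1]] is isomorphic to the symmetric group S₄ of order 24, and the subgroup generated by the first three of these matrices is a normal subgroup of it isomorphic to A₄. -/

import Mathlib

open scoped LinearAlgebra.Projectivization
open Matrix Projectivization

noncomputable section

/-- The projective general linear group `PGL(2,k)`: `GL(2,k)` modulo its center. -/
abbrev PGL2 (k : Type) [Field k] : Type := GL (Fin 2) k ⧸ Subgroup.center (GL (Fin 2) k)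

variable {k : Type} [Field k]

open scoped Classical in
/-- The class in `PGL(2,k)` of a nonsingular 2×2 matrix (junk value `1` if singular). -/
def pgl (M : Matrix (Fin 2) (Fin 2) k) : PGL2 k :=
  if h : M.det ≠ 0 then QuotientGroup.mk (Matrix.GeneralLinearGroup.mkOfDetNeZero M h)
  else 1

/-- The projective line `P¹(k)`. -/
abbrev P1 (k : Type) [Field k] := ℙ k (Fin 2 → k)

/-- The linear automorphism of `k²` given by a matrix in `GL(2,k)`. -/
def glLinEquiv (g : GL (Fin 2) k) : (Fin 2 → k) ≃ₗ[k] (Fin 2 → k) :=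
  LinearMap.GeneralLinearGroup.generalLinearEquiv k (Fin 2 → k)
    (Matrix.GeneralLinearGroup.toLin g)

lemma glLinEquiv_apply (g : GL (Fin 2) k) (v : Fin 2 → k) :
    glLinEquiv g v = Matrix.mulVecLin g.val v := rfl

/-- `GL(2,k)` acts on `P¹(k)` by fractional linear transformations. -/
instance glAction : MulAction (GL (Fin 2) k) (P1 k) where
  smul g x := x.map (glLinEquiv g).toLinearMap (glLinEquiv g).injective
  one_smul x := by
    show Projectivization.map _ _ x = x
    have h1 : glLinEquiv (1 : GL (Fin 2) k) = LinearEquiv.refl k _ := by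
      simp only [glLinEquiv, _root_.map_one]; rfl
    induction' x using Projectivization.ind with v hv
    rw [Projectivization.map_mk]
    simp [h1]
  mul_smul g h x := by
    show Projectivization.map _ _ x =
      Projectivization.map _ _ (Projectivization.map _ _ x)
    have hgh : glLinEquiv (g * h) = (glLinEquiv h).trans (glLinEquiv g) := by
      simp only [glLinEquiv, _root_.map_mul]; rfl
    induction' x using Projectivization.ind with v hv
    simp only [Projectivization.map_mk, hgh]
    rfl

lemma gl_smul_mk (g : GL (Fin 2) k) (v : Fin 2 → k) (hv : v ≠ 0) :
    g • Projectivization.mk k v hv =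
      Projectivization.mk k (glLinEquiv g v) ((glLinEquiv g).map_ne_zero_iff.mpr hv) :=
  rfl

/-- Central (i.e. scalar) matrices act trivially on `P¹(k)`. -/
lemma central_smul_triv (c : GL (Fin 2) k) (hc : c ∈ Subgroup.center (GL (Fin 2) k))
    (x : P1 k) : c • x = x := by
  obtain ⟨r, hr⟩ : c.val ∈ Set.range (Matrix.scalar (Fin 2)) := by
    refine Matrix.mem_range_scalar_of_commute_transvectionStruct (fun t => ?_)
    have htGL : (Matrix.GeneralLinearGroup.mkOfDetNeZero t.toMatrix
        (by rw [t.det]; exact one_ne_zero) : GL (Fin 2) k) * c =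
        c * Matrix.GeneralLinearGroup.mkOfDetNeZero t.toMatrix
        (by rw [t.det]; exact one_ne_zero) :=
      (Subgroup.mem_center_iff.mp hc) _
    exact congrArg Units.val htGL
  have hr0 : r ≠ 0 := by
    rintro rfl
    have hu : IsUnit c.val.det := (Matrix.isUnit_iff_isUnit_det _).mp c.isUnit
    rw [← hr] at hu
    simp at hu
  induction' x using Projectivization.ind with v hv
  rw [gl_smul_mk]
  apply (Projectivization.mk_eq_mk_iff' k _ _ _ hv).mpr
  refine ⟨r, ?_⟩
  rw [glLinEquiv_apply, ← hr]
  funext j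
  simp [Matrix.mulVec_diagonal]

/-- The action of `GL(2,k)` on `P¹(k)` descends to `PGL(2,k)`. -/
instance pglAction : MulAction (PGL2 k) (P1 k) where
  smul g x := Quotient.liftOn' g (fun A => A • x) (by
    intro a b hab
    rw [QuotientGroup.leftRel_apply] at hab
    have : b = a * (a⁻¹ * b) := by group
    show a • x = b • x
    rw [this, SemigroupAction.mul_smul, central_smul_triv _ hab])
  one_smul x := by
    show (1 : GL (Fin 2) k) • x = x
    exact MulAction.one_smul x
  mul_smul a b x := by
    refine Quotient.inductionOn₂' a b (fun A B => ?_)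
    show (A * B) • x = A • (B • x)
    exact SemigroupAction.mul_smul A B x

/-- The point `(a : 1)` of `P¹(k)`. -/
def pt (a : k) : P1 k := Projectivization.mk k ![a, 1] (by
  intro h; simpa using congrFun h 1)

/-- The point at infinity `(1 : 0)` of `P¹(k)`. -/
def inftyPt : P1 k := Projectivization.mk k ![1, 0] (by
  intro h; simpa using congrFun h 0)


-- ## Auxiliary machinery: permutation representation on a finite invariant family

open Equiv Equiv.Perm
open scoped Pointwise

namespace Aux

def permCongrM {α β : Type} (e : α ≃ β) : Equiv.Perm α ≃* Equiv.Perm β where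
  toEquiv := e.permCongr
  map_mul' f g := by ext x; simp [Equiv.permCongr_apply]

variable {Γ X : Type} [Group Γ] [MulAction Γ X] {n : ℕ}
variable (q : Fin n → X)

abbrev stab : Subgroup Γ := MulAction.stabilizer Γ (Set.range q)

lemma mem_stab_of (g : Γ) (σ : Equiv.Perm (Fin n)) (h : ∀ j, g • q j = q (σ j)) :
    g ∈ stab q := by
  rw [MulAction.mem_stabilizer_iff]
  calc g • Set.range q = Set.range (fun j => g • q j) := by rw [Set.smul_set_range]
    _ = Set.range (q ∘ σ) := by rw [funext h]; rfl
    _ = Set.range q := σ.surjective.range_comp q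

def subAct : SubMulAction (stab (Γ := Γ) q) X where
  carrier := Set.range q
  smul_mem' := fun g {x} hx => by
    have hg : (g : Γ) • Set.range q = Set.range q := g.2
    have h2 : (g : Γ) • x ∈ (g : Γ) • Set.range q := Set.smul_mem_smul_set hx
    rwa [hg] at h2

variable (hq : Function.Injective q)

noncomputable def eqv : Fin n ≃ ↥(subAct (Γ := Γ) q) :=
  Equiv.ofBijective (fun j => ⟨q j, ⟨j, rfl⟩⟩)
    ⟨fun a b hab => hq (congrArg Subtype.val hab), by rintro ⟨x, j, rfl⟩; exact ⟨j, rfl⟩⟩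

noncomputable def permHom : ↥(stab (Γ := Γ) q) →* Equiv.Perm (Fin n) :=
  (permCongrM (eqv (Γ := Γ) q hq).symm).toMonoidHom.comp
    (MulAction.toPermHom _ ↥(subAct (Γ := Γ) q))

lemma smul_permHom (g : ↥(stab (Γ := Γ) q)) (j : Fin n) :
    (g : Γ) • q j = q (permHom (Γ := Γ) q hq g j) := by
  have h1 : permHom (Γ := Γ) q hq g j
      = (eqv (Γ := Γ) q hq).symm (g • (eqv (Γ := Γ) q hq j)) := rfl
  rw [h1]
  have h2 : q ((eqv (Γ := Γ) q hq).symm (g • eqv (Γ := Γ) q hq j)) =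
      ((eqv (Γ := Γ) q hq) ((eqv (Γ := Γ) q hq).symm (g • eqv (Γ := Γ) q hq j))).1 := rfl
  rw [h2, Equiv.apply_symm_apply]
  rfl

lemma permHom_eq (g : ↥(stab (Γ := Γ) q)) (σ : Equiv.Perm (Fin n))
    (h : ∀ j, (g : Γ) • q j = q (σ j)) : permHom (Γ := Γ) q hq g = σ := by
  refine Equiv.ext fun j => hq ?_
  rw [← smul_permHom (Γ := Γ) q hq g j, h j]

end Aux

-- ## The combinatorial (permutation-group) side

def σA : Perm (Fin 6) := swap 2 3 * swap 4 5
def σB : Perm (Fin 6) := swap 0 1 * swap 4 5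
def σC : Perm (Fin 6) := swap 0 3 * swap 3 5 * (swap 1 2 * swap 2 4)
def σD : Perm (Fin 6) := swap 2 4 * swap 4 3 * swap 3 5
def τ₀ : Perm (Fin 6) := swap 0 1 * (swap 2 3 * swap 4 5)

def τA : Perm (Fin 4) := swap 0 3 * swap 1 2
def τB : Perm (Fin 4) := swap 0 2 * swap 1 3
def τC : Perm (Fin 4) := swap 0 1 * swap 1 2
def τD : Perm (Fin 4) := swap 0 2 * swap 2 3 * swap 3 1

def Dfam : Fin 4 → Finset (Finset (Fin 6)) :=
  ![{{0,2,4},{1,3,5}}, {{0,2,5},{1,3,4}}, {{0,3,4},{1,2,5}}, {{0,3,5},{1,2,4}}]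

lemma hD_inj : Function.Injective Dfam := by decide

abbrev Mgrp : Subgroup (Perm (Fin 6)) := Aux.stab (Γ := Perm (Fin 6)) Dfam

noncomputable def ψ : ↥Mgrp →* Perm (Fin 4) := Aux.permHom Dfam hD_inj

lemma hσA : ∀ j, σA • Dfam j = Dfam (τA j) := by decide
lemma hσB : ∀ j, σB • Dfam j = Dfam (τB j) := by decide
lemma hσC : ∀ j, σC • Dfam j = Dfam (τC j) := by decide
lemma hσD : ∀ j, σD • Dfam j = Dfam (τD j) := by decide
lemma hστ₀ : ∀ j, τ₀ • Dfam j = Dfam ((1 : Perm (Fin 4)) j) := by decide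

lemma hMA : σA ∈ Mgrp := Aux.mem_stab_of _ _ τA hσA
lemma hMB : σB ∈ Mgrp := Aux.mem_stab_of _ _ τB hσB
lemma hMC : σC ∈ Mgrp := Aux.mem_stab_of _ _ τC hσC
lemma hMD : σD ∈ Mgrp := Aux.mem_stab_of _ _ τD hσD
lemma hMτ₀ : τ₀ ∈ Mgrp := Aux.mem_stab_of _ _ 1 hστ₀

lemma hψA : ψ ⟨σA, hMA⟩ = τA := Aux.permHom_eq _ _ _ τA hσA
lemma hψB : ψ ⟨σB, hMB⟩ = τB := Aux.permHom_eq _ _ _ τB hσB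
lemma hψC : ψ ⟨σC, hMC⟩ = τC := Aux.permHom_eq _ _ _ τC hσC
lemma hψD : ψ ⟨σD, hMD⟩ = τD := Aux.permHom_eq _ _ _ τD hσD
lemma hψτ₀ : ψ ⟨τ₀, hMτ₀⟩ = 1 := Aux.permHom_eq _ _ _ 1 hστ₀

set_option maxHeartbeats 4000000 in
set_option maxRecDepth 100000 in
lemma Ktriv : ∀ g : Perm (Fin 6), (∀ j : Fin 4, g • Dfam j = Dfam j) → g = 1 ∨ g = τ₀ := by
  decide

def Qgrp : Subgroup (Perm (Fin 6)) := Subgroup.closure {σA, σB, σC, σD}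

lemma hQM : Qgrp ≤ Mgrp := by
  rw [Qgrp, Subgroup.closure_le]
  rintro x (rfl | rfl | rfl | rfl)
  exacts [hMA, hMB, hMC, hMD]

noncomputable def χsgn : ↥Mgrp →* ℤˣ :=
  (Equiv.Perm.sign.comp Mgrp.subtype) * (Equiv.Perm.sign.comp ψ)

lemma hχQ : ∀ g, g ∈ Qgrp → ∀ (hm : g ∈ Mgrp), χsgn ⟨g, hm⟩ = 1 := by
  intro g hg
  rw [Qgrp] at hg
  induction hg using Subgroup.closure_induction with
  | mem x hx =>
      intro hm
      rcases hx with rfl | rfl | rfl | rfl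
      · show sign σA * sign (ψ ⟨σA, hm⟩) = 1
        rw [hψA]; decide
      · show sign σB * sign (ψ ⟨σB, hm⟩) = 1
        rw [hψB]; decide
      · show sign σC * sign (ψ ⟨σC, hm⟩) = 1
        rw [hψC]; decide
      · show sign σD * sign (ψ ⟨σD, hm⟩) = 1
        rw [hψD]; decide
  | one =>
      intro hm
      have h1 : (⟨(1 : Perm (Fin 6)), hm⟩ : ↥Mgrp) = 1 := rfl
      rw [h1, _root_.map_one]
  | mul x y hx hy ihx ihy =>
      intro hm
      have hmx : x ∈ Mgrp := hQM hx
      have hmy : y ∈ Mgrp := hQM hy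
      have h1 : (⟨x * y, hm⟩ : ↥Mgrp) = ⟨x, hmx⟩ * ⟨y, hmy⟩ := rfl
      rw [h1, _root_.map_mul, ihx hmx, ihy hmy, one_mul]
  | inv x hx ihx =>
      intro hm
      have hmx : x ∈ Mgrp := hQM hx
      have h1 : (⟨x⁻¹, hm⟩ : ↥Mgrp) = (⟨x, hmx⟩)⁻¹ := rfl
      rw [h1, _root_.map_inv, ihx hmx, inv_one]

lemma τ₀_not_mem_Q : τ₀ ∉ Qgrp := by
  intro h
  have h1 := hχQ τ₀ h hMτ₀
  have h2 : χsgn ⟨τ₀, hMτ₀⟩ = sign τ₀ * sign (ψ ⟨τ₀, hMτ₀⟩) := rfl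
  rw [h2, hψτ₀] at h1
  revert h1; decide

lemma isCycle_τD : IsCycle τD := by
  refine ⟨0, by decide, ?_⟩
  intro y hy
  fin_cases y
  · exact Equiv.Perm.SameCycle.refl _ _
  · exact ⟨(3 : ℤ), by decide⟩
  · exact ⟨(1 : ℤ), by decide⟩
  · exact ⟨(2 : ℤ), by decide⟩

lemma CtopLem : Subgroup.closure ({τA, τB, τC, τD} : Set (Perm (Fin 4))) = ⊤ := by
  rw [eq_top_iff, ← closure_cycle_adjacent_swap isCycle_τD (by decide) 3]
  rw [Subgroup.closure_le]
  rintro x (rfl | rfl)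
  · exact Subgroup.subset_closure (by simp)
  · have h : Equiv.swap (3 : Fin 4) (τD 3) = τD * τC := by decide
    rw [h]
    exact mul_mem (Subgroup.subset_closure (by simp)) (Subgroup.subset_closure (by simp))

set_option maxHeartbeats 1000000 in
set_option maxRecDepth 10000 in
lemma CH_eq : Subgroup.closure ({τA, τB, τC} : Set (Perm (Fin 4))) = alternatingGroup (Fin 4) := by
  apply le_antisymm
  · rw [Subgroup.closure_le]
    rintro x (rfl | rfl | rfl) <;> · rw [SetLike.mem_coe, Equiv.Perm.mem_alternatingGroup]; decide
  · rw [← Equiv.Perm.closure_three_cycles_eq_alternating, Subgroup.closure_le]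
    intro x hx
    have h3 : x.support.card = 3 := (card_support_eq_three_iff).mpr hx
    have hlist : x = τC ∨ x = τC * τC ∨ x = τA * τC * τA ∨ x = τA * (τC * τC) * τA ∨
        x = τB * τC * τB ∨ x = τB * (τC * τC) * τB ∨
        x = (τA * τB) * τC * (τA * τB) ∨ x = (τA * τB) * (τC * τC) * (τA * τB) := by
      clear hx
      revert h3
      revert x
      decide
    have mA := Subgroup.subset_closure (show τA ∈ ({τA, τB, τC} : Set (Perm (Fin 4))) by simp)
    have mB := Subgroup.subset_closure (show τB ∈ ({τA, τB, τC} : Set (Perm (Fin 4))) by simp)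
    have mC := Subgroup.subset_closure (show τC ∈ ({τA, τB, τC} : Set (Perm (Fin 4))) by simp)
    rcases hlist with rfl | rfl | rfl | rfl | rfl | rfl | rfl | rfl
    · exact mC
    · exact mul_mem mC mC
    · exact mul_mem (mul_mem mA mC) mA
    · exact mul_mem (mul_mem mA (mul_mem mC mC)) mA
    · exact mul_mem (mul_mem mB mC) mB
    · exact mul_mem (mul_mem mB (mul_mem mC mC)) mB
    · exact mul_mem (mul_mem (mul_mem mA mB) mC) (mul_mem mA mB)
    · exact mul_mem (mul_mem (mul_mem mA mB) (mul_mem mC mC)) (mul_mem mA mB)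

-- ## The geometric side: action on the six octahedral points

lemma pgl_smul {M : Matrix (Fin 2) (Fin 2) k} (h : M.det ≠ 0) (x : P1 k) :
    pgl M • x = (Matrix.GeneralLinearGroup.mkOfDetNeZero M h) • x := by
  rw [pgl]
  rw [dif_pos h]
  rfl

lemma pgl_smul_mk {M : Matrix (Fin 2) (Fin 2) k} (h : M.det ≠ 0) {v w : Fin 2 → k}
    (hv : v ≠ 0) (hw : w ≠ 0) (c : k) (hc : c • w = M *ᵥ v) :
    pgl M • Projectivization.mk k v hv = Projectivization.mk k w hw := by
  rw [pgl_smul h, gl_smul_mk]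
  apply (Projectivization.mk_eq_mk_iff' k _ _ _ hw).mpr
  exact ⟨c, by rw [hc, glLinEquiv_apply]; rfl⟩

lemma pt_ne_pt {a b : k} (h : a ≠ b) : (pt a : P1 k) ≠ pt b := by
  intro hab
  rcases (Projectivization.mk_eq_mk_iff' k _ _ _ _).mp hab with ⟨c, hc⟩
  have h1 : c * 1 = 1 := congrFun hc 1
  have h0 : c * b = a := congrFun hc 0
  rw [mul_one] at h1
  rw [h1, one_mul] at h0
  exact h (h0.symm)

lemma pt_ne_infty (a : k) : (pt a : P1 k) ≠ inftyPt := by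
  intro hab
  rcases (Projectivization.mk_eq_mk_iff' k _ _ _ _).mp hab with ⟨c, hc⟩
  have h1 : c * 0 = 1 := congrFun hc 1
  simp at h1

lemma infty_ne_pt (a : k) : (inftyPt : P1 k) ≠ pt a := fun h => pt_ne_infty a h.symm

lemma smul_pt_eq {M : Matrix (Fin 2) (Fin 2) k} (h : M.det ≠ 0) (a b : k) (c : k)
    (hc : c • ![b,1] = M *ᵥ ![a,1]) : pgl M • pt a = pt b := pgl_smul_mk h _ _ c hc

lemma smul_pt_infty {M : Matrix (Fin 2) (Fin 2) k} (h : M.det ≠ 0) (a : k) (c : k)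
    (hc : c • ![(1:k),0] = M *ᵥ ![a,1]) : pgl M • pt a = inftyPt := pgl_smul_mk h _ _ c hc

lemma smul_infty_pt {M : Matrix (Fin 2) (Fin 2) k} (h : M.det ≠ 0) (b : k) (c : k)
    (hc : c • ![b,1] = M *ᵥ ![(1:k),0]) : pgl M • (inftyPt : P1 k) = pt b := pgl_smul_mk h _ _ c hc

lemma smul_infty_infty {M : Matrix (Fin 2) (Fin 2) k} (h : M.det ≠ 0) (c : k)
    (hc : c • ![(1:k),0] = M *ᵥ ![(1:k),0]) : pgl M • (inftyPt : P1 k) = inftyPt :=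
  pgl_smul_mk h _ _ c hc

lemma fix3 (g : PGL2 k) (h0 : g • pt (0:k) = pt 0) (hoo : g • (inftyPt : P1 k) = inftyPt)
    (h1 : g • pt (1:k) = pt 1) : g = 1 := by
  obtain ⟨A, rfl⟩ := QuotientGroup.mk_surjective g
  have e0 : (QuotientGroup.mk A : PGL2 k) • pt (0:k) = A • pt (0:k) := rfl
  have eoo : (QuotientGroup.mk A : PGL2 k) • (inftyPt : P1 k) = A • (inftyPt : P1 k) := rfl
  have e1 : (QuotientGroup.mk A : PGL2 k) • pt (1:k) = A • pt (1:k) := rfl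
  rw [e0] at h0; rw [eoo] at hoo; rw [e1] at h1
  rw [pt, gl_smul_mk] at h0 h1
  rw [inftyPt, gl_smul_mk] at hoo
  rcases (Projectivization.mk_eq_mk_iff' k _ _ _ _).mp h0 with ⟨c0, hc0⟩
  rcases (Projectivization.mk_eq_mk_iff' k _ _ _ _).mp hoo with ⟨coo, hcoo⟩
  rcases (Projectivization.mk_eq_mk_iff' k _ _ _ _).mp h1 with ⟨c1, hc1⟩
  rw [glLinEquiv_apply] at hc0 hc1 hcoo
  have k00 : c0 * 0 = A.val 0 0 * 0 + A.val 0 1 * 1 := by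
    have := congrFun hc0 0
    simpa [Matrix.mulVec, dotProduct, Fin.sum_univ_two] using this
  have koo0 : coo * 1 = A.val 0 0 * 1 + A.val 0 1 * 0 := by
    have := congrFun hcoo 0
    simpa [Matrix.mulVec, dotProduct, Fin.sum_univ_two] using this
  have koo1 : coo * 0 = A.val 1 0 * 1 + A.val 1 1 * 0 := by
    have := congrFun hcoo 1
    simpa [Matrix.mulVec, dotProduct, Fin.sum_univ_two] using this
  have k10 : c1 * 1 = A.val 0 0 * 1 + A.val 0 1 * 1 := by
    have := congrFun hc1 0
    simpa [Matrix.mulVec, dotProduct, Fin.sum_univ_two] using this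
  have k11 : c1 * 1 = A.val 1 0 * 1 + A.val 1 1 * 1 := by
    have := congrFun hc1 1
    simpa [Matrix.mulVec, dotProduct, Fin.sum_univ_two] using this
  have hA01 : A.val 0 1 = 0 := by linear_combination (-1 : k) * k00
  have hA10 : A.val 1 0 = 0 := by linear_combination (-1 : k) * koo1
  have hdiag : A.val 0 0 = A.val 1 1 := by linear_combination k11 - k10 - hA01 + hA10
  have hAval : A.val = (A.val 0 0) • (1 : Matrix (Fin 2) (Fin 2) k) := by
    ext i j
    fin_cases i <;> fin_cases j <;>
      simp [Matrix.one_apply, hA01, hA10, ← hdiag]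
  apply (QuotientGroup.eq_one_iff A).mpr
  refine Subgroup.mem_center_iff.mpr fun B => Units.ext ?_
  rw [Units.val_mul, Units.val_mul, hAval]
  rw [mul_smul_comm, smul_mul_assoc, mul_one, one_mul]

def pfam (i : k) : Fin 6 → P1 k := ![pt 0, inftyPt, pt 1, pt (-1), pt i, pt (-i)]

lemma pfam_inj {i : k} (hi : i^2 = -1) (h2 : (2:k) ≠ 0) : Function.Injective (pfam i) := by
  have hi0 : i ≠ 0 := by intro h; rw [h] at hi; exact one_ne_zero (α := k) (by linear_combination hi)
  have h1m : (1:k) ≠ -1 := by intro h; exact h2 (by linear_combination h)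
  have hi1 : i ≠ 1 := by intro h; rw [h] at hi; exact h2 (by linear_combination hi)
  have him1 : i ≠ -1 := by intro h; rw [h] at hi; exact h2 (by linear_combination hi)
  have himi : i ≠ -i := by intro h; exact (mul_ne_zero h2 hi0) (by linear_combination h)
  have h01 : (0:k) ≠ 1 := zero_ne_one
  have h0m1 : (0:k) ≠ -1 := by intro h; exact h2 (by linear_combination 2*h)
  have h0i : (0:k) ≠ i := fun h => hi0 h.symm
  have h0mi : (0:k) ≠ -i := by intro h; exact hi0 (by linear_combination h)
  have h1i : (1:k) ≠ i := fun h => hi1 h.symm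
  have h1mi : (1:k) ≠ -i := by intro h; exact him1 (by linear_combination h)
  have hm1i : (-1:k) ≠ i := fun h => him1 h.symm
  have hm1mi : (-1:k) ≠ -i := by intro h; exact hi1 (by linear_combination h)
  intro a b hab
  fin_cases a <;> fin_cases b
  · rfl
  · exact absurd hab (pt_ne_infty _)
  · exact absurd hab (pt_ne_pt h01)
  · exact absurd hab (pt_ne_pt h0m1)
  · exact absurd hab (pt_ne_pt h0i)
  · exact absurd hab (pt_ne_pt h0mi)
  · exact absurd hab (infty_ne_pt _)
  · rfl
  · exact absurd hab (infty_ne_pt _)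
  · exact absurd hab (infty_ne_pt _)
  · exact absurd hab (infty_ne_pt _)
  · exact absurd hab (infty_ne_pt _)
  · exact absurd hab (pt_ne_pt (h01.symm))
  · exact absurd hab (pt_ne_infty _)
  · rfl
  · exact absurd hab (pt_ne_pt h1m)
  · exact absurd hab (pt_ne_pt h1i)
  · exact absurd hab (pt_ne_pt h1mi)
  · exact absurd hab (pt_ne_pt (h0m1.symm))
  · exact absurd hab (pt_ne_infty _)
  · exact absurd hab (pt_ne_pt (h1m.symm))
  · rfl
  · exact absurd hab (pt_ne_pt hm1i)
  · exact absurd hab (pt_ne_pt hm1mi)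
  · exact absurd hab (pt_ne_pt (h0i.symm))
  · exact absurd hab (pt_ne_infty _)
  · exact absurd hab (pt_ne_pt (h1i.symm))
  · exact absurd hab (pt_ne_pt (hm1i.symm))
  · rfl
  · exact absurd hab (pt_ne_pt himi)
  · exact absurd hab (pt_ne_pt (h0mi.symm))
  · exact absurd hab (pt_ne_infty _)
  · exact absurd hab (pt_ne_pt (h1mi.symm))
  · exact absurd hab (pt_ne_pt (hm1mi.symm))
  · exact absurd hab (pt_ne_pt (himi.symm))
  · rfl

lemma detA : (!![(1:k),0;0,-1]).det ≠ 0 := by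
  rw [Matrix.det_fin_two_of]; intro h; exact one_ne_zero (α := k) (by linear_combination -h)

lemma detB : (!![(0:k),1;1,0]).det ≠ 0 := by
  rw [Matrix.det_fin_two_of]; intro h; exact one_ne_zero (α := k) (by linear_combination -h)

lemma detC {i : k} (hi : i^2 = -1) (h2 : (2:k) ≠ 0) : (!![(1:k),i;1,-i]).det ≠ 0 := by
  have hi0 : i ≠ 0 := by intro h; rw [h] at hi; exact one_ne_zero (α := k) (by linear_combination hi)
  rw [Matrix.det_fin_two_of]
  intro h
  exact (mul_ne_zero h2 hi0) (by linear_combination -h)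

lemma detD {i : k} (hi : i^2 = -1) : (!![i,0;0,(1:k)]).det ≠ 0 := by
  have hi0 : i ≠ 0 := by intro h; rw [h] at hi; exact one_ne_zero (α := k) (by linear_combination hi)
  rw [Matrix.det_fin_two_of]
  intro h
  exact hi0 (by linear_combination h)

lemma ga {i : k} (hi : i^2 = -1) (h2 : (2:k) ≠ 0) :
    ∀ j, pgl !![(1:k),0;0,-1] • pfam i j = pfam i (σA j) := by
  have e : ∀ j : Fin 6, σA j = ![0,1,3,2,5,4] j := by decide
  intro j; rw [e j]; fin_cases j
  · exact smul_pt_eq detA (0:k) (0:k) (-1:k) (by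
      funext jj; fin_cases jj <;>
        simp [Matrix.mulVec, dotProduct, Fin.sum_univ_two] <;>
        first
          | ring1
          | linear_combination hi
          | linear_combination (-1 : k) * hi
          | linear_combination (2 : k) * hi
          | linear_combination (-2 : k) * hi
          | linear_combination i * hi
          | linear_combination (-i) * hi)
  · exact smul_infty_infty detA (1:k) (by
      funext jj; fin_cases jj <;>
        simp [Matrix.mulVec, dotProduct, Fin.sum_univ_two] <;>
        first
          | ring1
          | linear_combination hi
          | linear_combination (-1 : k) * hi
          | linear_combination (2 : k) * hi
          | linear_combination (-2 : k) * hi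
          | linear_combination i * hi
          | linear_combination (-i) * hi)
  · exact smul_pt_eq detA (1:k) (-1:k) (-1:k) (by
      funext jj; fin_cases jj <;>
        simp [Matrix.mulVec, dotProduct, Fin.sum_univ_two] <;>
        first
          | ring1
          | linear_combination hi
          | linear_combination (-1 : k) * hi
          | linear_combination (2 : k) * hi
          | linear_combination (-2 : k) * hi
          | linear_combination i * hi
          | linear_combination (-i) * hi)
  · exact smul_pt_eq detA (-1:k) (1:k) (-1:k) (by
      funext jj; fin_cases jj <;>
        simp [Matrix.mulVec, dotProduct, Fin.sum_univ_two] <;>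
        first
          | ring1
          | linear_combination hi
          | linear_combination (-1 : k) * hi
          | linear_combination (2 : k) * hi
          | linear_combination (-2 : k) * hi
          | linear_combination i * hi
          | linear_combination (-i) * hi)
  · exact smul_pt_eq detA i (-i) (-1:k) (by
      funext jj; fin_cases jj <;>
        simp [Matrix.mulVec, dotProduct, Fin.sum_univ_two] <;>
        first
          | ring1
          | linear_combination hi
          | linear_combination (-1 : k) * hi
          | linear_combination (2 : k) * hi
          | linear_combination (-2 : k) * hi
          | linear_combination i * hi
          | linear_combination (-i) * hi)
  · exact smul_pt_eq detA (-i) i (-1:k) (by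
      funext jj; fin_cases jj <;>
        simp [Matrix.mulVec, dotProduct, Fin.sum_univ_two] <;>
        first
          | ring1
          | linear_combination hi
          | linear_combination (-1 : k) * hi
          | linear_combination (2 : k) * hi
          | linear_combination (-2 : k) * hi
          | linear_combination i * hi
          | linear_combination (-i) * hi)

lemma gb {i : k} (hi : i^2 = -1) (h2 : (2:k) ≠ 0) :
    ∀ j, pgl !![(0:k),1;1,0] • pfam i j = pfam i (σB j) := by
  have e : ∀ j : Fin 6, σB j = ![1,0,2,3,5,4] j := by decide
  intro j; rw [e j]; fin_cases j
  · exact smul_pt_infty detB (0:k) (1:k) (by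
      funext jj; fin_cases jj <;>
        simp [Matrix.mulVec, dotProduct, Fin.sum_univ_two] <;>
        first
          | ring1
          | linear_combination hi
          | linear_combination (-1 : k) * hi
          | linear_combination (2 : k) * hi
          | linear_combination (-2 : k) * hi
          | linear_combination i * hi
          | linear_combination (-i) * hi)
  · exact smul_infty_pt detB (0:k) (1:k) (by
      funext jj; fin_cases jj <;>
        simp [Matrix.mulVec, dotProduct, Fin.sum_univ_two] <;>
        first
          | ring1
          | linear_combination hi
          | linear_combination (-1 : k) * hi
          | linear_combination (2 : k) * hi
          | linear_combination (-2 : k) * hi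
          | linear_combination i * hi
          | linear_combination (-i) * hi)
  · exact smul_pt_eq detB (1:k) (1:k) (1:k) (by
      funext jj; fin_cases jj <;>
        simp [Matrix.mulVec, dotProduct, Fin.sum_univ_two] <;>
        first
          | ring1
          | linear_combination hi
          | linear_combination (-1 : k) * hi
          | linear_combination (2 : k) * hi
          | linear_combination (-2 : k) * hi
          | linear_combination i * hi
          | linear_combination (-i) * hi)
  · exact smul_pt_eq detB (-1:k) (-1:k) (-1:k) (by
      funext jj; fin_cases jj <;>
        simp [Matrix.mulVec, dotProduct, Fin.sum_univ_two] <;>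
        first
          | ring1
          | linear_combination hi
          | linear_combination (-1 : k) * hi
          | linear_combination (2 : k) * hi
          | linear_combination (-2 : k) * hi
          | linear_combination i * hi
          | linear_combination (-i) * hi)
  · exact smul_pt_eq detB i (-i) i (by
      funext jj; fin_cases jj <;>
        simp [Matrix.mulVec, dotProduct, Fin.sum_univ_two] <;>
        first
          | ring1
          | linear_combination hi
          | linear_combination (-1 : k) * hi
          | linear_combination (2 : k) * hi
          | linear_combination (-2 : k) * hi
          | linear_combination i * hi
          | linear_combination (-i) * hi)
  · exact smul_pt_eq detB (-i) i (-i) (by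
      funext jj; fin_cases jj <;>
        simp [Matrix.mulVec, dotProduct, Fin.sum_univ_two] <;>
        first
          | ring1
          | linear_combination hi
          | linear_combination (-1 : k) * hi
          | linear_combination (2 : k) * hi
          | linear_combination (-2 : k) * hi
          | linear_combination i * hi
          | linear_combination (-i) * hi)

lemma gc {i : k} (hi : i^2 = -1) (h2 : (2:k) ≠ 0) :
    ∀ j, pgl !![(1:k),i;1,-i] • pfam i j = pfam i (σC j) := by
  have e : ∀ j : Fin 6, σC j = ![3,2,4,5,1,0] j := by decide
  intro j; rw [e j]; fin_cases j
  · exact smul_pt_eq (detC hi h2) (0:k) (-1:k) (-i) (by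
      funext jj; fin_cases jj <;>
        simp [Matrix.mulVec, dotProduct, Fin.sum_univ_two] <;>
        first
          | ring1
          | linear_combination hi
          | linear_combination (-1 : k) * hi
          | linear_combination (2 : k) * hi
          | linear_combination (-2 : k) * hi
          | linear_combination i * hi
          | linear_combination (-i) * hi)
  · exact smul_infty_pt (detC hi h2) (1:k) (1:k) (by
      funext jj; fin_cases jj <;>
        simp [Matrix.mulVec, dotProduct, Fin.sum_univ_two] <;>
        first
          | ring1
          | linear_combination hi
          | linear_combination (-1 : k) * hi
          | linear_combination (2 : k) * hi
          | linear_combination (-2 : k) * hi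
          | linear_combination i * hi
          | linear_combination (-i) * hi)
  · exact smul_pt_eq (detC hi h2) (1:k) i (1-i) (by
      funext jj; fin_cases jj <;>
        simp [Matrix.mulVec, dotProduct, Fin.sum_univ_two] <;>
        first
          | ring1
          | linear_combination hi
          | linear_combination (-1 : k) * hi
          | linear_combination (2 : k) * hi
          | linear_combination (-2 : k) * hi
          | linear_combination i * hi
          | linear_combination (-i) * hi)
  · exact smul_pt_eq (detC hi h2) (-1:k) (-i) (-1-i) (by
      funext jj; fin_cases jj <;>
        simp [Matrix.mulVec, dotProduct, Fin.sum_univ_two] <;>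
        first
          | ring1
          | linear_combination hi
          | linear_combination (-1 : k) * hi
          | linear_combination (2 : k) * hi
          | linear_combination (-2 : k) * hi
          | linear_combination i * hi
          | linear_combination (-i) * hi)
  · exact smul_pt_infty (detC hi h2) i (2*i) (by
      funext jj; fin_cases jj <;>
        simp [Matrix.mulVec, dotProduct, Fin.sum_univ_two] <;>
        first
          | ring1
          | linear_combination hi
          | linear_combination (-1 : k) * hi
          | linear_combination (2 : k) * hi
          | linear_combination (-2 : k) * hi
          | linear_combination i * hi
          | linear_combination (-i) * hi)
  · exact smul_pt_eq (detC hi h2) (-i) (0:k) (-2*i) (by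
      funext jj; fin_cases jj <;>
        simp [Matrix.mulVec, dotProduct, Fin.sum_univ_two] <;>
        first
          | ring1
          | linear_combination hi
          | linear_combination (-1 : k) * hi
          | linear_combination (2 : k) * hi
          | linear_combination (-2 : k) * hi
          | linear_combination i * hi
          | linear_combination (-i) * hi)

lemma gd {i : k} (hi : i^2 = -1) (h2 : (2:k) ≠ 0) :
    ∀ j, pgl !![i,0;0,(1:k)] • pfam i j = pfam i (σD j) := by
  have e : ∀ j : Fin 6, σD j = ![0,1,4,5,3,2] j := by decide
  intro j; rw [e j]; fin_cases j
  · exact smul_pt_eq (detD hi) (0:k) (0:k) (1:k) (by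
      funext jj; fin_cases jj <;>
        simp [Matrix.mulVec, dotProduct, Fin.sum_univ_two] <;>
        first
          | ring1
          | linear_combination hi
          | linear_combination (-1 : k) * hi
          | linear_combination (2 : k) * hi
          | linear_combination (-2 : k) * hi
          | linear_combination i * hi
          | linear_combination (-i) * hi)
  · exact smul_infty_infty (detD hi) i (by
      funext jj; fin_cases jj <;>
        simp [Matrix.mulVec, dotProduct, Fin.sum_univ_two] <;>
        first
          | ring1
          | linear_combination hi
          | linear_combination (-1 : k) * hi
          | linear_combination (2 : k) * hi
          | linear_combination (-2 : k) * hi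
          | linear_combination i * hi
          | linear_combination (-i) * hi)
  · exact smul_pt_eq (detD hi) (1:k) i (1:k) (by
      funext jj; fin_cases jj <;>
        simp [Matrix.mulVec, dotProduct, Fin.sum_univ_two] <;>
        first
          | ring1
          | linear_combination hi
          | linear_combination (-1 : k) * hi
          | linear_combination (2 : k) * hi
          | linear_combination (-2 : k) * hi
          | linear_combination i * hi
          | linear_combination (-i) * hi)
  · exact smul_pt_eq (detD hi) (-1:k) (-i) (1:k) (by
      funext jj; fin_cases jj <;>
        simp [Matrix.mulVec, dotProduct, Fin.sum_univ_two] <;>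
        first
          | ring1
          | linear_combination hi
          | linear_combination (-1 : k) * hi
          | linear_combination (2 : k) * hi
          | linear_combination (-2 : k) * hi
          | linear_combination i * hi
          | linear_combination (-i) * hi)
  · exact smul_pt_eq (detD hi) i (-1:k) (1:k) (by
      funext jj; fin_cases jj <;>
        simp [Matrix.mulVec, dotProduct, Fin.sum_univ_two] <;>
        first
          | ring1
          | linear_combination hi
          | linear_combination (-1 : k) * hi
          | linear_combination (2 : k) * hi
          | linear_combination (-2 : k) * hi
          | linear_combination i * hi
          | linear_combination (-i) * hi)
  · exact smul_pt_eq (detD hi) (-i) (1:k) (1:k) (by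
      funext jj; fin_cases jj <;>
        simp [Matrix.mulVec, dotProduct, Fin.sum_univ_two] <;>
        first
          | ring1
          | linear_combination hi
          | linear_combination (-1 : k) * hi
          | linear_combination (2 : k) * hi
          | linear_combination (-2 : k) * hi
          | linear_combination i * hi
          | linear_combination (-i) * hi)

/-- Let `k` be algebraically closed of characteristic ≠ 2 and `i` a square root
of `-1`. The subgroup `G` of `PGL(2,k)` generated by the classes of `[[1,0],[0,-1]]`,
`[[0,1],[1,0]]`, `[[1,i],[1,-i]]` and `[[i,0],[0,1]]` is isomorphic to the symmetric group
`S₄` of order 24, and the subgroup `H` generated by the first three matrices is a normal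
subgroup of `G` isomorphic to `A₄`. -/
theorem stmt_9 (k : Type) [Field k] [IsAlgClosed k] (h2 : (2 : k) ≠ 0)
    (i : k) (hi : i^2 = -1)
    (G H : Subgroup (PGL2 k))
    (hG : G = Subgroup.closure
      {pgl !![(1:k), 0; 0, -1], pgl !![(0:k), 1; 1, 0], pgl !![(1:k), i; 1, -i],
        pgl !![i, 0; 0, 1]})
    (hH : H = Subgroup.closure
      {pgl !![(1:k), 0; 0, -1], pgl !![(0:k), 1; 1, 0], pgl !![(1:k), i; 1, -i]}) :
    (Nonempty (G ≃* Equiv.Perm (Fin 4)) ∧ Nat.card G = 24) ∧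
    H ≤ G ∧ (H.subgroupOf G).Normal ∧ Nonempty (H ≃* alternatingGroup (Fin 4)) := by
-- main proof
  classical
  have hga : pgl !![(1:k), 0; 0, -1] ∈ G := hG ▸ Subgroup.subset_closure (by simp)
  have hgb : pgl !![(0:k), 1; 1, 0] ∈ G := hG ▸ Subgroup.subset_closure (by simp)
  have hgc : pgl !![(1:k), i; 1, -i] ∈ G := hG ▸ Subgroup.subset_closure (by simp)
  have hgd : pgl !![i, 0; 0, (1:k)] ∈ G := hG ▸ Subgroup.subset_closure (by simp)
  have hha : pgl !![(1:k), 0; 0, -1] ∈ H := hH ▸ Subgroup.subset_closure (by simp)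
  have hhb : pgl !![(0:k), 1; 1, 0] ∈ H := hH ▸ Subgroup.subset_closure (by simp)
  have hhc : pgl !![(1:k), i; 1, -i] ∈ H := hH ▸ Subgroup.subset_closure (by simp)
  have hHG : H ≤ G := by
    rw [hH, hG]
    refine Subgroup.closure_mono ?_
    intro x hx
    simp only [Set.mem_insert_iff, Set.mem_singleton_iff] at hx ⊢
    tauto
  have hpinj : Function.Injective (pfam i) := pfam_inj hi h2
  have hNa : pgl !![(1:k), 0; 0, -1] ∈ Aux.stab (Γ := PGL2 k) (pfam i) :=
    Aux.mem_stab_of _ _ σA (ga hi h2)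
  have hNb : pgl !![(0:k), 1; 1, 0] ∈ Aux.stab (Γ := PGL2 k) (pfam i) :=
    Aux.mem_stab_of _ _ σB (gb hi h2)
  have hNc : pgl !![(1:k), i; 1, -i] ∈ Aux.stab (Γ := PGL2 k) (pfam i) :=
    Aux.mem_stab_of _ _ σC (gc hi h2)
  have hNd : pgl !![i, 0; 0, (1:k)] ∈ Aux.stab (Γ := PGL2 k) (pfam i) :=
    Aux.mem_stab_of _ _ σD (gd hi h2)
  have hGN : G ≤ Aux.stab (Γ := PGL2 k) (pfam i) := by
    rw [hG]
    refine (Subgroup.closure_le _).mpr ?_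
    rintro x (rfl | rfl | rfl | rfl)
    exacts [hNa, hNb, hNc, hNd]
  set ρ : ↥(Aux.stab (Γ := PGL2 k) (pfam i)) →* Perm (Fin 6) :=
    Aux.permHom (pfam i) hpinj with hρdef
  have hρinj : Function.Injective ρ := by
    rw [injective_iff_map_eq_one]
    intro g hg1
    have hfix : ∀ j, (g : PGL2 k) • pfam i j = pfam i j := fun j => by
      have hh := Aux.smul_permHom (pfam i) hpinj g j
      rw [← hρdef, hg1] at hh
      simpa using hh
    exact Subtype.ext (fix3 _ (hfix 0) (hfix 1) (hfix 2))
  set φ : ↥G →* Perm (Fin 6) := ρ.comp (Subgroup.inclusion hGN) with hφdef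
  have hφinj : Function.Injective φ := hρinj.comp (Subgroup.inclusion_injective hGN)
  have hφa : ∀ (hg : pgl !![(1:k), 0; 0, -1] ∈ G), φ ⟨_, hg⟩ = σA := fun hg =>
    Aux.permHom_eq (pfam i) hpinj _ σA (ga hi h2)
  have hφb : ∀ (hg : pgl !![(0:k), 1; 1, 0] ∈ G), φ ⟨_, hg⟩ = σB := fun hg =>
    Aux.permHom_eq (pfam i) hpinj _ σB (gb hi h2)
  have hφc : ∀ (hg : pgl !![(1:k), i; 1, -i] ∈ G), φ ⟨_, hg⟩ = σC := fun hg =>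
    Aux.permHom_eq (pfam i) hpinj _ σC (gc hi h2)
  have hφd : ∀ (hg : pgl !![i, 0; 0, (1:k)] ∈ G), φ ⟨_, hg⟩ = σD := fun hg =>
    Aux.permHom_eq (pfam i) hpinj _ σD (gd hi h2)
  have hφQ : ∀ g, g ∈ Subgroup.closure
      {pgl !![(1:k), 0; 0, -1], pgl !![(0:k), 1; 1, 0], pgl !![(1:k), i; 1, -i],
        pgl !![i, 0; 0, 1]} → ∀ (hgG : g ∈ G), φ ⟨g, hgG⟩ ∈ Qgrp := by
    intro g hg
    induction hg using Subgroup.closure_induction with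
    | mem x hx =>
        intro hgG
        rcases hx with rfl | rfl | rfl | rfl
        · rw [hφa hgG]; exact Subgroup.subset_closure (by simp [σA, σB, σC, σD])
        · rw [hφb hgG]; exact Subgroup.subset_closure (by simp [σA, σB, σC, σD])
        · rw [hφc hgG]; exact Subgroup.subset_closure (by simp [σA, σB, σC, σD])
        · rw [hφd hgG]; exact Subgroup.subset_closure (by simp [σA, σB, σC, σD])
    | one =>
        intro hgG
        have h1 : (⟨(1 : PGL2 k), hgG⟩ : ↥G) = 1 := rfl
        rw [h1, _root_.map_one]; exact one_mem _
    | mul x y hx hy ihx ihy =>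
        intro hgG
        have hxG : x ∈ G := by rw [hG]; exact hx
        have hyG : y ∈ G := by rw [hG]; exact hy
        have h1 : (⟨x * y, hgG⟩ : ↥G) = ⟨x, hxG⟩ * ⟨y, hyG⟩ := rfl
        rw [h1, _root_.map_mul]; exact mul_mem (ihx hxG) (ihy hyG)
    | inv x hx ihx =>
        intro hgG
        have hxG : x ∈ G := by rw [hG]; exact hx
        have h1 : (⟨x⁻¹, hgG⟩ : ↥G) = (⟨x, hxG⟩)⁻¹ := rfl
        rw [h1, _root_.map_inv]; exact inv_mem (ihx hxG)
  have hφQ' : ∀ x : ↥G, φ x ∈ Qgrp := fun x => hφQ x.1 (by rw [← hG]; exact x.2) x.2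
  have hφM : ∀ x : ↥G, φ x ∈ Mgrp := fun x => hQM (hφQ' x)
  set F : ↥G →* Perm (Fin 4) := ψ.comp (φ.codRestrict Mgrp hφM) with hFdef
  have hFap : ∀ x : ↥G, F x = ψ ⟨φ x, hφM x⟩ := fun x => rfl
  have hFa : ∀ (hg : pgl !![(1:k), 0; 0, -1] ∈ G), F ⟨_, hg⟩ = τA := by
    intro hg
    rw [hFap]
    have h1 : (⟨φ ⟨_, hg⟩, hφM _⟩ : ↥Mgrp) = ⟨σA, hMA⟩ := Subtype.ext (hφa hg)
    rw [h1, hψA]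
  have hFb : ∀ (hg : pgl !![(0:k), 1; 1, 0] ∈ G), F ⟨_, hg⟩ = τB := by
    intro hg
    rw [hFap]
    have h1 : (⟨φ ⟨_, hg⟩, hφM _⟩ : ↥Mgrp) = ⟨σB, hMB⟩ := Subtype.ext (hφb hg)
    rw [h1, hψB]
  have hFc : ∀ (hg : pgl !![(1:k), i; 1, -i] ∈ G), F ⟨_, hg⟩ = τC := by
    intro hg
    rw [hFap]
    have h1 : (⟨φ ⟨_, hg⟩, hφM _⟩ : ↥Mgrp) = ⟨σC, hMC⟩ := Subtype.ext (hφc hg)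
    rw [h1, hψC]
  have hFd : ∀ (hg : pgl !![i, 0; 0, (1:k)] ∈ G), F ⟨_, hg⟩ = τD := by
    intro hg
    rw [hFap]
    have h1 : (⟨φ ⟨_, hg⟩, hφM _⟩ : ↥Mgrp) = ⟨σD, hMD⟩ := Subtype.ext (hφd hg)
    rw [h1, hψD]
  have hFinj : Function.Injective F := by
    rw [injective_iff_map_eq_one]
    intro x hx1
    have hψ1 : ψ ⟨φ x, hφM x⟩ = 1 := by rw [← hFap]; exact hx1
    have hfix : ∀ j, φ x • Dfam j = Dfam j := fun j => by
      have hh := Aux.smul_permHom Dfam hD_inj ⟨φ x, hφM x⟩ j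
      rw [show Aux.permHom Dfam hD_inj = ψ from rfl, hψ1] at hh
      simpa using hh
    rcases Ktriv (φ x) hfix with h1 | hτ
    · apply hφinj
      rw [h1, _root_.map_one]
    · exfalso
      apply τ₀_not_mem_Q
      rw [← hτ]
      exact hφQ' x
  have hFsurj : Function.Surjective F := by
    have hrange : ⊤ ≤ F.range := by
      rw [← CtopLem]
      refine (Subgroup.closure_le _).mpr ?_
      rintro x (rfl | rfl | rfl | rfl)
      · exact ⟨⟨_, hga⟩, hFa hga⟩
      · exact ⟨⟨_, hgb⟩, hFb hgb⟩
      · exact ⟨⟨_, hgc⟩, hFc hgc⟩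
      · exact ⟨⟨_, hgd⟩, hFd hgd⟩
    intro y
    obtain ⟨x, hx⟩ := hrange (Subgroup.mem_top y)
    exact ⟨x, hx⟩
  have hCHmem : ∀ g, g ∈ Subgroup.closure
      {pgl !![(1:k), 0; 0, -1], pgl !![(0:k), 1; 1, 0], pgl !![(1:k), i; 1, -i]} →
      ∀ (hgG : g ∈ G), F ⟨g, hgG⟩ ∈ Subgroup.closure ({τA, τB, τC} : Set (Perm (Fin 4))) := by
    intro g hg
    induction hg using Subgroup.closure_induction with
    | mem x hx =>
        intro hgG
        rcases hx with rfl | rfl | rfl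
        · rw [hFa hgG]; exact Subgroup.subset_closure (by simp)
        · rw [hFb hgG]; exact Subgroup.subset_closure (by simp)
        · rw [hFc hgG]; exact Subgroup.subset_closure (by simp)
    | one =>
        intro hgG
        have h1 : (⟨(1 : PGL2 k), hgG⟩ : ↥G) = 1 := rfl
        rw [h1, _root_.map_one]; exact one_mem _
    | mul x y hx hy ihx ihy =>
        intro hgG
        have hxG : x ∈ G := hHG (by rw [hH]; exact hx)
        have hyG : y ∈ G := hHG (by rw [hH]; exact hy)
        have h1 : (⟨x * y, hgG⟩ : ↥G) = ⟨x, hxG⟩ * ⟨y, hyG⟩ := rfl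
        rw [h1, _root_.map_mul]; exact mul_mem (ihx hxG) (ihy hyG)
    | inv x hx ihx =>
        intro hgG
        have hxG : x ∈ G := hHG (by rw [hH]; exact hx)
        have h1 : (⟨x⁻¹, hgG⟩ : ↥G) = (⟨x, hxG⟩)⁻¹ := rfl
        rw [h1, _root_.map_inv]; exact inv_mem (ihx hxG)
  have hmap : Subgroup.map F (H.subgroupOf G) = alternatingGroup (Fin 4) := by
    rw [← CH_eq]
    apply le_antisymm
    · rintro x ⟨⟨g, hgG⟩, hgH, rfl⟩
      rw [SetLike.mem_coe, Subgroup.mem_subgroupOf] at hgH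
      exact hCHmem g (by rw [← hH]; exact hgH) hgG
    · refine (Subgroup.closure_le _).mpr ?_
      rintro x (rfl | rfl | rfl)
      · exact ⟨⟨_, hga⟩, Subgroup.mem_subgroupOf.mpr hha, hFa hga⟩
      · exact ⟨⟨_, hgb⟩, Subgroup.mem_subgroupOf.mpr hhb, hFb hgb⟩
      · exact ⟨⟨_, hgc⟩, Subgroup.mem_subgroupOf.mpr hhc, hFc hgc⟩
  have hcard : Nat.card G = 24 := by
    have h1 : Nat.card ↥G = Nat.card (Perm (Fin 4)) :=
      Nat.card_congr (MulEquiv.ofBijective F ⟨hFinj, hFsurj⟩).toEquiv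
    rw [h1, Nat.card_eq_fintype_card]
    decide
  have hnormal : (H.subgroupOf G).Normal := by
    have hsub : H.subgroupOf G = Subgroup.comap F (alternatingGroup (Fin 4)) := by
      rw [← hmap, Subgroup.comap_map_eq_self_of_injective hFinj]
    rw [hsub]
    exact Subgroup.Normal.comap inferInstance F
  refine ⟨⟨⟨MulEquiv.ofBijective F ⟨hFinj, hFsurj⟩⟩, hcard⟩, hHG, hnormal, ?_⟩
  exact ⟨(Subgroup.subgroupOfEquivOfLe hHG).symm.trans
    ((Subgroup.equivMapOfInjective _ F hFinj).trans (MulEquiv.subgroupCongr hmap))⟩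

end
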